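/- arXiv:1002.4070 — 2 statements merged into one kernel-verified Lean document; each statement's English description precedes it below -/
import Mathlib

section
/- Let φ, ψ : ℝ → ℝ with φ twice differentiable, and define g : ℝ² → ℝ by g(s, t) = s² − (t − φ(s))². Then along the curve t = φ(s) + ψ(s), the quantity C(g) = g_ss·(g_t)² − 2·g_st·g_s·g_t + g_tt·(g_s)² satisfies C(g)(s, φ(s) + ψ(s)) = 8·(ψ(s)² + ψ(s)³·φ''(s) − s²) for every s ∈ ℝ. -/
/-- First partial derivative of `F : ℝ × ℝ → ℝ` in the first variable `s`. -/
noncomputable def pdS (F : ℝ × ℝ → ℝ) (p : ℝ × ℝ) : ℝ :=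
  deriv (fun s => F (s, p.2)) p.1

/-- First partial derivative of `F : ℝ × ℝ → ℝ` in the second variable `t`. -/
noncomputable def pdT (F : ℝ × ℝ → ℝ) (p : ℝ × ℝ) : ℝ :=
  deriv (fun t => F (p.1, t)) p.2

/-- The level-curve curvature numerator
`C(g) = g_ss·(g_t)² − 2·g_st·g_s·g_t + g_tt·(g_s)²`. -/
noncomputable def Cexpr (F : ℝ × ℝ → ℝ) (p : ℝ × ℝ) : ℝ :=
  pdS (pdS F) p * (pdT F p) ^ 2 - 2 * pdT (pdS F) p * pdS F p * pdT F p +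
    pdT (pdT F) p * (pdS F p) ^ 2

/-- For `g(s,t) = s² − (t − φ(s))²` with `φ` twice differentiable, along the
curve `t = φ(s) + ψ(s)` one has
`C(g)(s, φ(s) + ψ(s)) = 8·(ψ(s)² + ψ(s)³·φ''(s) − s²)`. -/
theorem Cexpr_along_shifted_curve (φ ψ : ℝ → ℝ)
    (hφ : ∀ s, DifferentiableAt ℝ φ s)
    (hφ' : ∀ s, DifferentiableAt ℝ (deriv φ) s) :
    ∀ s : ℝ,
      Cexpr (fun q => q.1 ^ 2 - (q.2 - φ q.1) ^ 2) (s, φ s + ψ s) =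
        8 * ((ψ s) ^ 2 + (ψ s) ^ 3 * deriv (deriv φ) s - s ^ 2) := by
  -- compute pdS g
  have h1 : pdS (fun q : ℝ × ℝ => q.1 ^ 2 - (q.2 - φ q.1) ^ 2) =
      fun p : ℝ × ℝ => 2 * p.1 + 2 * (p.2 - φ p.1) * deriv φ p.1 := by
    funext p
    unfold pdS
    have H : HasDerivAt (fun s => s ^ 2 - (p.2 - φ s) ^ 2)
        (2 * p.1 + 2 * (p.2 - φ p.1) * deriv φ p.1) p.1 := by
      have h := (hasDerivAt_pow 2 p.1).sub
        (((hasDerivAt_const p.1 p.2).sub (hφ p.1).hasDerivAt).pow 2)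
      refine h.congr_deriv ?_
      simp only [Pi.sub_apply, Pi.add_apply, Pi.mul_apply, Pi.neg_apply, id]
      push_cast
      ring
    exact H.deriv
  have h2 : pdT (fun q : ℝ × ℝ => q.1 ^ 2 - (q.2 - φ q.1) ^ 2) =
      fun p : ℝ × ℝ => -(2 * (p.2 - φ p.1)) := by
    funext p
    unfold pdT
    have H : HasDerivAt (fun t => p.1 ^ 2 - (t - φ p.1) ^ 2)
        (-(2 * (p.2 - φ p.1))) p.2 := by
      have h := (hasDerivAt_const p.2 (p.1 ^ 2)).sub
        (((hasDerivAt_id p.2).sub_const (φ p.1)).pow 2)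
      refine h.congr_deriv ?_
      simp only [Pi.sub_apply, Pi.add_apply, Pi.mul_apply, Pi.neg_apply, id]
      simp [id]
    exact H.deriv
  intro s
  have hss : pdS (pdS (fun q : ℝ × ℝ => q.1 ^ 2 - (q.2 - φ q.1) ^ 2)) (s, φ s + ψ s) =
      2 - 2 * (deriv φ s) ^ 2 + 2 * (ψ s) * deriv (deriv φ) s := by
    rw [h1]
    unfold pdS
    have H : HasDerivAt (fun x => 2 * x + 2 * ((φ s + ψ s) - φ x) * deriv φ x)
        (2 - 2 * (deriv φ s) ^ 2 + 2 * (ψ s) * deriv (deriv φ) s) s := by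
      have h := ((hasDerivAt_id s).const_mul 2).add
        ((((hasDerivAt_const s (φ s + ψ s)).sub (hφ s).hasDerivAt).const_mul 2).mul
          (hφ' s).hasDerivAt)
      refine h.congr_deriv ?_
      simp only [Pi.sub_apply, Pi.add_apply, Pi.mul_apply, Pi.neg_apply, id]
      ring
    exact H.deriv
  have hst : pdT (pdS (fun q : ℝ × ℝ => q.1 ^ 2 - (q.2 - φ q.1) ^ 2)) (s, φ s + ψ s) =
      2 * deriv φ s := by
    rw [h1]
    unfold pdT
    have H : HasDerivAt (fun t => 2 * s + 2 * (t - φ s) * deriv φ s)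
        (2 * deriv φ s) (φ s + ψ s) := by
      have h := (hasDerivAt_const (φ s + ψ s) (2 * s)).add
        ((((hasDerivAt_id (φ s + ψ s)).sub_const (φ s)).const_mul 2).mul_const (deriv φ s))
      refine h.congr_deriv ?_
      ring
    exact H.deriv
  have htt : pdT (pdT (fun q : ℝ × ℝ => q.1 ^ 2 - (q.2 - φ q.1) ^ 2)) (s, φ s + ψ s) =
      -2 := by
    rw [h2]
    unfold pdT
    have H : HasDerivAt (fun t => -(2 * (t - φ s))) (-2 : ℝ) (φ s + ψ s) := by
      have h := (((hasDerivAt_id (φ s + ψ s)).sub_const (φ s)).const_mul 2).neg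
      refine h.congr_deriv ?_
      ring
    exact H.deriv
  have hs0 : pdS (fun q : ℝ × ℝ => q.1 ^ 2 - (q.2 - φ q.1) ^ 2) (s, φ s + ψ s) =
      2 * s + 2 * (ψ s) * deriv φ s := by
    rw [h1]; simp
  have ht0 : pdT (fun q : ℝ × ℝ => q.1 ^ 2 - (q.2 - φ q.1) ^ 2) (s, φ s + ψ s) =
      -(2 * ψ s) := by
    rw [h2]; simp
  unfold Cexpr
  rw [hss, hst, htt, hs0, ht0]
  ring
end

section
/- Let C ⊂ ℂ be a smooth simple closed curve (the image of an injective C¹ map of the circle with nowhere-vanishing derivative), and let a, b, c ∈ ℂ be three pairwise distinct non-collinear points. Then there exist three pairwise distinct points a', b', c' ∈ C such that (c' − a')/(b' − a') = (c − a)/(b − a); that is, the triangle a'b'c' inscribed in C is directly similar to the triangle abc. -/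
set_option maxHeartbeats 4000000

open Set Filter Topology MeasureTheory intervalIntegral Complex

noncomputable section

namespace InscribedAux

lemma eq_of_continuousOn_int (f : ℝ → ℂ) (a b : ℝ) (hab : a ≤ b)
    (hf : ContinuousOn f (Icc a b))
    (hint : ∀ t ∈ Icc a b, ∃ n : ℤ, f t = n * (2 * Real.pi * I)) :
    f a = f b := by
  have ha : a ∈ Icc a b := left_mem_Icc.2 hab
  have hb : b ∈ Icc a b := right_mem_Icc.2 hab
  obtain ⟨na, hna⟩ := hint a ha
  obtain ⟨nb, hnb⟩ := hint b hb
  by_cases hnab : na = nb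
  · rw [hna, hnb, hnab]
  · exfalso
    set g : ℝ → ℝ := fun t => (f t).im with hg
    have hgc : ContinuousOn g (Icc a b) := Complex.continuous_im.comp_continuousOn hf
    have him : ∀ n : ℤ, ((n : ℂ) * (2 * Real.pi * I)).im = n * (2 * Real.pi) := by
      intro n; simp
    have hga : g a = na * (2 * Real.pi) := by rw [hg]; simp only [hna, him]
    have hgb : g b = nb * (2 * Real.pi) := by rw [hg]; simp only [hnb, him]
    set m : ℤ := min na nb with hm
    have hπ : (0:ℝ) < 2 * Real.pi := by positivity
    have hcmem : ((m : ℝ) + 1/2) * (2 * Real.pi) ∈ uIcc (g a) (g b) := by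
      rw [hga, hgb]
      rcases le_total na nb with h | h
      · have hm' : m = na := min_eq_left h
        have h1 : na + 1 ≤ nb := by omega
        have h1' : (na : ℝ) + 1 ≤ (nb : ℝ) := by exact_mod_cast h1
        rw [hm', uIcc_of_le (by nlinarith)]
        constructor <;> nlinarith
      · have hm' : m = nb := min_eq_right h
        have h1 : nb + 1 ≤ na := by omega
        have h1' : (nb : ℝ) + 1 ≤ (na : ℝ) := by exact_mod_cast h1
        rw [hm', uIcc_of_ge (by nlinarith)]
        constructor <;> nlinarith
    have := intermediate_value_uIcc (a := a) (b := b) (f := g)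
      (by rwa [uIcc_of_le hab])
    obtain ⟨t, ht, hgt⟩ := this hcmem
    rw [uIcc_of_le hab] at ht
    obtain ⟨k, hk⟩ := hint t ht
    have : g t = k * (2 * Real.pi) := by rw [hg]; simp only [hk, him]
    rw [this] at hgt
    have hk2 : (k : ℝ) = (m : ℝ) + 1/2 := by
      have := mul_right_cancel₀ (ne_of_gt hπ) hgt
      linarith
    have : (2 * k : ℝ) = (2 * m + 1 : ℤ) := by push_cast; linarith
    have : (2 * k : ℤ) = 2 * m + 1 := by exact_mod_cast this
    omega

lemma winding_integer (Γ D : ℝ → ℂ) (p : ℂ)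
    (hD : ∀ s, HasDerivAt Γ (D s) s) (hDc : Continuous D)
    (hper : Γ (-(1/2) : ℝ) = Γ (1/2 : ℝ)) (hp : ∀ s, Γ s ≠ p) :
    ∃ n : ℤ, (∫ s in (-(1/2) : ℝ)..(1/2 : ℝ), D s / (Γ s - p)) = n * (2 * Real.pi * I) := by
  have hΓc : Continuous Γ := by
    have : Differentiable ℝ Γ := fun s => (hD s).differentiableAt
    exact this.continuous
  set f : ℝ → ℂ := fun s => D s / (Γ s - p) with hf
  have hfc : Continuous f := by
    apply hDc.div (hΓc.sub continuous_const)
    intro s; exact sub_ne_zero.2 (hp s)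
  set g : ℝ → ℂ := fun t => ∫ s in (-(1/2) : ℝ)..t, f s with hg
  have hgd : ∀ t : ℝ, HasDerivAt g (f t) t := by
    intro t
    exact intervalIntegral.integral_hasDerivAt_right
      (hfc.intervalIntegrable _ _)
      (hfc.stronglyMeasurableAtFilter _ _)
      hfc.continuousAt
  set h : ℝ → ℂ := fun t => Complex.exp (-g t) * (Γ t - p) with hh
  have hhd : ∀ t : ℝ, HasDerivAt h 0 t := by
    intro t
    have h1 : HasDerivAt (fun t => Complex.exp (-g t)) (-f t * Complex.exp (-g t)) t := by
      have := ((hgd t).neg).cexp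
      convert this using 1
      · rfl
      · simp only [Pi.neg_apply]; ring
    have h2 : HasDerivAt (fun t => Γ t - p) (D t) t := (hD t).sub_const p
    have := h1.mul h2
    refine this.congr_deriv (Eq.symm ?_)
    have hne : Γ t - p ≠ 0 := sub_ne_zero.2 (hp t)
    have h3 : D t / (Γ t - p) * (Γ t - p) = D t := div_mul_cancel₀ _ hne
    calc (0:ℂ) = -(D t / (Γ t - p) * (Γ t - p)) * Complex.exp (-g t)
          + Complex.exp (-g t) * D t := by rw [h3]; ring
      _ = -f t * Complex.exp (-g t) * (Γ t - p) + Complex.exp (-g t) * D t := by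
          simp only [hf]; ring
  have hconst : h (-(1/2) : ℝ) = h (1/2 : ℝ) := by
    apply is_const_of_deriv_eq_zero (f := h)
    · exact fun t => (hhd t).differentiableAt
    · exact fun t => (hhd t).deriv
  have hg0 : g (-(1/2) : ℝ) = 0 := intervalIntegral.integral_same
  have hΓp : Γ (1/2 : ℝ) - p ≠ 0 := sub_ne_zero.2 (hp _)
  have hexp : Complex.exp (-g (1/2 : ℝ)) = 1 := by
    have h5 := hconst
    rw [hh] at h5
    simp only [hg0, neg_zero, Complex.exp_zero, one_mul] at h5
    rw [hper] at h5
    have h6 : Complex.exp (-g (1/2:ℝ)) * (Γ (1/2:ℝ) - p) = 1 * (Γ (1/2:ℝ) - p) := by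
      rw [one_mul]; exact h5.symm
    exact mul_right_cancel₀ hΓp h6
  have : Complex.exp (g (1/2 : ℝ)) = 1 := by
    have h1 : Complex.exp (g (1/2:ℝ)) * Complex.exp (-g (1/2:ℝ)) = 1 := by
      rw [← Complex.exp_add]; simp
    rw [hexp, mul_one] at h1; exact h1
  obtain ⟨n, hn⟩ := Complex.exp_eq_one_iff.1 this
  exact ⟨n, hn⟩

lemma continuousAt_winding (g Γ : ℝ → ℂ) (a b : ℝ) (p₀ : ℂ)
    (hg : Continuous g) (hΓ : Continuous Γ)
    (hp : ∀ s ∈ uIcc a b, Γ s ≠ p₀) :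
    ContinuousAt (fun p => ∫ s in a..b, g s / (Γ s - p)) p₀ := by
  -- minimum distance
  have hne : (uIcc a b).Nonempty := nonempty_uIcc
  obtain ⟨s₀, hs₀, hmin⟩ := isCompact_uIcc.exists_isMinOn hne
    ((hΓ.sub continuous_const).norm.continuousOn (s := uIcc a b))
  set d : ℝ := ‖Γ s₀ - p₀‖ with hd
  have hd0 : 0 < d := norm_pos_iff.2 (sub_ne_zero.2 (hp s₀ hs₀))
  have hdist : ∀ s ∈ uIcc a b, d ≤ ‖Γ s - p₀‖ := fun s hs => hmin hs
  -- bound on g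
  obtain ⟨M, hM⟩ := isCompact_uIcc.exists_bound_of_continuousOn
    (hg.continuousOn (s := uIcc a b))
  have hM0 : 0 ≤ M := le_trans (norm_nonneg _) (hM a left_mem_uIcc)
  -- lower bound on denominators for p near p₀
  have hlow : ∀ p ∈ Metric.ball p₀ (d/2), ∀ s ∈ uIcc a b, d/2 ≤ ‖Γ s - p‖ := by
    intro p hpball s hs
    have h1 : ‖Γ s - p₀‖ ≤ ‖Γ s - p‖ + ‖p - p₀‖ := by
      calc ‖Γ s - p₀‖ = ‖(Γ s - p) + (p - p₀)‖ := by ring_nf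
        _ ≤ ‖Γ s - p‖ + ‖p - p₀‖ := norm_add_le _ _
    have h2 : ‖p - p₀‖ < d/2 := by
      rw [← dist_eq_norm]; exact hpball
    have := hdist s hs
    linarith
  unfold ContinuousAt
  apply intervalIntegral.tendsto_integral_filter_of_dominated_convergence
    (bound := fun _ => M / (d/2))
  · filter_upwards [Metric.ball_mem_nhds p₀ (by positivity : (0:ℝ) < d/2)] with p hpb
    apply ContinuousOn.aestronglyMeasurable _ measurableSet_uIoc
    apply ContinuousOn.div (hg.continuousOn) ((hΓ.sub continuous_const).continuousOn)
    intro s hs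
    have : d/2 ≤ ‖Γ s - p‖ := hlow p hpb s (uIoc_subset_uIcc hs)
    intro h0
    rw [show Γ s - p = 0 from h0] at this; simp at this; linarith
  · filter_upwards [Metric.ball_mem_nhds p₀ (by positivity : (0:ℝ) < d/2)] with p hpb
    filter_upwards with s hs
    rw [norm_div]
    apply div_le_div₀ (by positivity) (hM s (uIoc_subset_uIcc hs)) (by positivity)
      (hlow p hpb s (uIoc_subset_uIcc hs))
  · exact intervalIntegrable_const
  · filter_upwards with s hs
    apply Tendsto.div tendsto_const_nhds
    · exact tendsto_const_nhds.sub tendsto_id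
    · exact sub_ne_zero.2 (hp s (uIoc_subset_uIcc hs))

lemma continuous_param (F G : ℝ → ℝ → ℂ) (a b : ℝ)
    (hF : Continuous fun q : ℝ × ℝ => F q.1 q.2)
    (hG : Continuous fun q : ℝ × ℝ => G q.1 q.2)
    (hG0 : ∀ l s, G l s ≠ 0) :
    Continuous fun l => ∫ s in a..b, F l s / G l s := by
  rw [continuous_iff_continuousAt]
  intro l₀
  set K : Set (ℝ × ℝ) := Icc (l₀ - 1) (l₀ + 1) ×ˢ uIcc a b with hK
  have hKc : IsCompact K := (isCompact_Icc).prod isCompact_uIcc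
  have hKne : K.Nonempty := ⟨⟨l₀, a⟩, ⟨by constructor <;> linarith, left_mem_uIcc⟩⟩
  obtain ⟨q₀, hq₀, hmin⟩ := hKc.exists_isMinOn hKne (hG.norm.continuousOn (s := K))
  set d : ℝ := ‖G q₀.1 q₀.2‖ with hd
  have hd0 : 0 < d := norm_pos_iff.2 (hG0 _ _)
  obtain ⟨M, hM⟩ := hKc.exists_bound_of_continuousOn (hF.continuousOn (s := K))
  have hM0 : 0 ≤ M := le_trans (norm_nonneg _) (hM ⟨l₀, a⟩ ⟨⟨by linarith, by linarith⟩, left_mem_uIcc⟩)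
  unfold ContinuousAt
  apply intervalIntegral.tendsto_integral_filter_of_dominated_convergence
    (bound := fun _ => M / d)
  · filter_upwards with l
    apply ContinuousOn.aestronglyMeasurable _ measurableSet_uIoc
    apply ContinuousOn.div
    · exact (hF.comp (continuous_const.prodMk continuous_id)).continuousOn
    · exact (hG.comp (continuous_const.prodMk continuous_id)).continuousOn
    · exact fun s _ => hG0 l s
  · filter_upwards [Icc_mem_nhds (by linarith : l₀ - 1 < l₀) (by linarith : l₀ < l₀ + 1)]
      with l hl
    filter_upwards with s hs
    have hmem : (⟨l, s⟩ : ℝ × ℝ) ∈ K := ⟨hl, uIoc_subset_uIcc hs⟩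
    rw [norm_div]
    exact div_le_div₀ hM0 (hM _ hmem) hd0 (hmin hmem)
  · exact intervalIntegrable_const
  · filter_upwards with s hs
    have h1 : Tendsto (fun l => F l s) (𝓝 l₀) (𝓝 (F l₀ s)) :=
      (hF.comp (continuous_id.prodMk continuous_const)).tendsto l₀
    have h2 : Tendsto (fun l => G l s) (𝓝 l₀) (𝓝 (G l₀ s)) :=
      (hG.comp (continuous_id.prodMk continuous_const)).tendsto l₀
    exact h1.div h2 (hG0 l₀ s)

lemma key (γ : ℝ → ℂ) (hγ : ContDiff ℝ 1 γ) (hper : Function.Periodic γ 1)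
    (hinj : ∀ s t : ℝ, γ s = γ t → ∃ n : ℤ, t = s + n)
    (hder : ∀ s, deriv γ s ≠ 0) (w : ℂ) (hw : 0 < w.im) :
    ∃ p q r : ℂ, p ∈ Set.range γ ∧ q ∈ Set.range γ ∧ r ∈ Set.range γ ∧
      p ≠ q ∧ p ≠ r ∧ q ≠ r ∧ r - p = w * (q - p) := by
  classical
  have hw0 : w ≠ 0 := fun h => by simp [h] at hw
  set a' : ℂ := γ 0 with ha'
  set dc : ℝ → ℂ := fun τ => a' + w * (γ τ - a') with hdc
  by_cases hexist : ∃ τ : ℝ, dc τ ∈ Set.range γ ∧ dc τ ≠ a'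
  · obtain ⟨τ, hmem, hne⟩ := hexist
    have hqa : γ τ ≠ a' := by
      intro h; apply hne; rw [hdc]; simp [h]
    refine ⟨a', γ τ, dc τ, ⟨0, rfl⟩, ⟨τ, rfl⟩, hmem, ?_, ?_, ?_, ?_⟩
    · exact fun h => hqa h.symm
    · exact fun h => hne h.symm
    · intro h
      have h1 : γ τ - a' = w * (γ τ - a') := by
        nth_rewrite 1 [h]; rw [hdc]; ring
      have h2 : (1 - w) * (γ τ - a') = 0 := by linear_combination h1
      rcases mul_eq_zero.1 h2 with h3 | h3
      · have : w = 1 := by linear_combination -h3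
        rw [this] at hw; simp at hw
      · exact hqa (by linear_combination h3)
    · rw [hdc]; ring
  · push_neg at hexist
    exfalso
    -- basic data
    have hγc : Continuous γ := hγ.continuous
    have hγd : ∀ s, HasDerivAt γ (deriv γ s) s := fun s => (hγ.differentiable one_ne_zero s).hasDerivAt
    have hγdc : Continuous (deriv γ) := hγ.continuous_deriv le_rfl
    have hper12 : γ (-(1/2) : ℝ) = γ (1/2 : ℝ) := by
      have := hper (-(1/2))
      norm_num at this
      exact this.symm
    set v : ℂ := deriv γ 0 with hv
    have hv0 : v ≠ 0 := hder 0
    have hdccont : Continuous dc := continuous_const.add (continuous_const.mul (hγc.sub continuous_const))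
    have hdc0 : dc 0 = a' := by simp [hdc, ha']
    -- z, x, y
    set z : ℝ → ℂ := fun s => (γ s - a') / v with hzdef
    have hz0 : z 0 = 0 := by simp [hzdef, ha']
    have hzd : ∀ s, HasDerivAt z (deriv γ s / v) s := fun s => ((hγd s).sub_const a').div_const v
    have hzc : Continuous z := (hγc.sub continuous_const).div_const v
    have hzsm : ContDiff ℝ 1 z := (hγ.sub contDiff_const).div_const v
    set x : ℝ → ℝ := fun s => (z s).re with hxdef
    set y : ℝ → ℝ := fun s => (z s).im with hydef
    have hzxy : ∀ s, z s = (x s : ℂ) + (y s : ℂ) * I := fun s => (Complex.re_add_im (z s)).symm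
    have hγz : ∀ s, γ s - a' = z s * v := by
      intro s; rw [hzdef]; field_simp
    -- constants
    set A : ℝ := |w.re| + w.im + 1 with hA
    have hA1 : 1 ≤ A := by
      have := abs_nonneg w.re; rw [hA]; linarith [hw.le]
    have hA0 : 0 < A := by linarith
    have hwA : w.im + |w.re| ≤ A := by rw [hA]; linarith
    set η : ℝ := w.im / (8 * A) with hη
    have hη0 : 0 < η := by rw [hη]; positivity
    have hηA : η * A = w.im / 8 := by rw [hη]; field_simp
    have hηle : η ≤ 1/8 := by
      rw [hη, div_le_iff₀ (by positivity)]
      nlinarith [abs_nonneg w.re]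
    set ε : ℝ := η / 2 with hε
    have hε0 : 0 < ε := by rw [hε]; positivity
    have hεle : ε ≤ 1/16 := by rw [hε]; linarith
    have hεA : ε * A = w.im / 16 := by rw [hε]; nlinarith [hηA]
    have hεwA : ε * (w.im + |w.re|) ≤ w.im / 16 := by
      rw [← hεA]
      exact mul_le_mul_of_nonneg_left hwA hε0.le
    -- δ from little-o
    have hz1 : HasDerivAt z 1 0 := by
      have h1 := hzd 0
      rwa [← hv, div_self hv0] at h1
    have hlo : ∀ᶠ s in 𝓝 (0:ℝ), ‖z s - (s:ℂ)‖ ≤ ε * ‖s‖ := by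
      have h2 := (hasDerivAt_iff_isLittleO.1 hz1).bound hε0
      filter_upwards [h2] with s hs
      simpa [hz0, Complex.real_smul] using hs
    obtain ⟨δ₀, hδ₀pos, hδ₀⟩ := Metric.eventually_nhds_iff.1 hlo
    set δ : ℝ := min (δ₀ / 2) (1/5) with hδdef
    have hδpos : 0 < δ := by rw [hδdef]; positivity
    have hδlt : δ ≤ 1/5 := min_le_right _ _
    have hδsmall : ∀ s : ℝ, |s| ≤ δ → ‖z s - (s:ℂ)‖ ≤ ε * |s| := by
      intro s hs
      have h1 : dist s 0 < δ₀ := by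
        rw [Real.dist_eq, sub_zero]
        calc |s| ≤ δ := hs
          _ ≤ δ₀/2 := min_le_left _ _
          _ < δ₀ := by linarith
      simpa [Real.norm_eq_abs] using hδ₀ h1
    have hyb : ∀ s : ℝ, |s| ≤ δ → |y s| ≤ ε * |s| := by
      intro s hs
      have h1 := hδsmall s hs
      have h2 : |y s| ≤ ‖z s - (s:ℂ)‖ := by
        have := Complex.abs_im_le_norm (z s - (s:ℂ))
        simpa [hydef] using this
      linarith
    have hxb : ∀ s : ℝ, |s| ≤ δ → |x s - s| ≤ ε * |s| := by
      intro s hs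
      have h1 := hδsmall s hs
      have h2 : |x s - s| ≤ ‖z s - (s:ℂ)‖ := by
        have := Complex.abs_re_le_norm (z s - (s:ℂ))
        simpa [hxdef] using this
      linarith
    have hxlow : ∀ s : ℝ, |s| ≤ δ → (1 - ε) * |s| ≤ |x s| := by
      intro s hs
      have h1 := hxb s hs
      have h2 : |s| - |x s| ≤ |s - x s| := abs_sub_abs_le_abs_sub _ _
      rw [abs_sub_comm] at h2
      nlinarith
    have hxup : ∀ s : ℝ, |s| ≤ δ → |x s| ≤ (1 + ε) * |s| := by
      intro s hs
      have h1 := hxb s hs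
      have h2 : |x s| - |s| ≤ |x s - s| := abs_sub_abs_le_abs_sub _ _
      nlinarith
    have hxposs : ∀ s : ℝ, 0 < s → s ≤ δ → (1 - ε) * s ≤ x s := by
      intro s h1 h2
      have h3 := hxb s (by rw [abs_of_pos h1]; exact h2)
      rw [abs_of_pos h1] at h3
      have h4 := abs_le.1 h3
      nlinarith [h4.1]
    have hxnegs : ∀ s : ℝ, s < 0 → -δ ≤ s → x s ≤ (1 - ε) * s := by
      intro s h1 h2
      have hs : |s| ≤ δ := by rw [abs_of_neg h1]; linarith
      have h3 := hxb s hs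
      rw [abs_of_neg h1] at h3
      have h4 := abs_le.1 h3
      nlinarith [h4.2]
    have hcone : ∀ s : ℝ, |s| ≤ δ → |y s| ≤ η * |x s| := by
      intro s hs
      have h1 := hyb s hs
      have h2 := hxlow s hs
      have h3 : ε ≤ η * (1 - ε) := by
        rw [hε]; nlinarith
      calc |y s| ≤ ε * |s| := h1
        _ ≤ η * ((1 - ε) * |s|) := by nlinarith [abs_nonneg s]
        _ ≤ η * |x s| := by nlinarith
    -- bump function
    set χb : ContDiffBump (0:ℝ) := ⟨3*δ/4, δ, by positivity, by linarith⟩ with hχb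
    set χ : ℝ → ℝ := fun s => χb s with hχ
    have hχ1 : ∀ s : ℝ, |s| ≤ 3*δ/4 → χ s = 1 := by
      intro s hs
      apply χb.one_of_mem_closedBall
      simpa [Metric.mem_closedBall, Real.dist_eq] using hs
    have hχ0 : ∀ s : ℝ, δ ≤ |s| → χ s = 0 := by
      intro s hs
      apply χb.zero_of_le_dist
      simpa [Real.dist_eq] using hs
    have hχmem : ∀ s, 0 ≤ χ s ∧ χ s ≤ 1 := fun s => ⟨χb.nonneg, χb.le_one⟩
    have hχsm : ContDiff ℝ 1 χ := χb.contDiff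
    -- ψ and its derivative
    have hysm : ContDiff ℝ 1 y := Complex.imCLM.contDiff.comp hzsm
    set ψ : ℝ → ℝ := fun s => χ s * y s with hψ
    have hψsm : ContDiff ℝ 1 ψ := hχsm.mul hysm
    set ψd : ℝ → ℝ := deriv ψ with hψd
    have hψderiv : ∀ s, HasDerivAt ψ (ψd s) s := fun s => (hψsm.differentiable one_ne_zero s).hasDerivAt
    have hψdc : Continuous ψd := hψsm.continuous_deriv le_rfl
    have hψcont : Continuous ψ := hψsm.continuous
    -- clamp
    set cl : ℝ → ℝ := fun l => max 0 (min 1 l) with hcl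
    have hclc : Continuous cl := continuous_const.max (continuous_const.min continuous_id)
    have hcl0 : cl 0 = 0 := by norm_num [hcl]
    have hcl1 : cl 1 = 1 := by norm_num [hcl]
    have hclmem : ∀ l, 0 ≤ cl l ∧ cl l ≤ 1 :=
      fun l => ⟨le_max_left _ _, max_le (by norm_num) (min_le_left _ _)⟩
    -- the homotopy of curves
    set Γf : ℝ → ℝ → ℂ := fun l s => γ s - ((cl l * ψ s : ℝ) : ℂ) * (I * v) with hΓf
    set Df : ℝ → ℝ → ℂ := fun l s => deriv γ s - ((cl l * ψd s : ℝ) : ℂ) * (I * v) with hDf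
    have hΓd : ∀ l s, HasDerivAt (Γf l) (Df l s) s := by
      intro l s
      have h1 : HasDerivAt (fun u => cl l * ψ u) (cl l * ψd s) s := (hψderiv s).const_mul _
      have h2 : HasDerivAt (fun u => ((cl l * ψ u : ℝ) : ℂ)) ((cl l * ψd s : ℝ) : ℂ) s :=
        Complex.ofRealCLM.hasFDerivAt.comp_hasDerivAt s h1
      exact (hγd s).sub (h2.mul_const (I * v))
    have hΓcont : Continuous fun q : ℝ × ℝ => Γf q.1 q.2 := by
      apply (hγc.comp continuous_snd).sub
      exact (Complex.continuous_ofReal.comp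
        ((hclc.comp continuous_fst).mul (hψcont.comp continuous_snd))).mul continuous_const
    have hDcont : Continuous fun q : ℝ × ℝ => Df q.1 q.2 := by
      apply (hγdc.comp continuous_snd).sub
      exact (Complex.continuous_ofReal.comp
        ((hclc.comp continuous_fst).mul (hψdc.comp continuous_snd))).mul continuous_const
    have hΓ0 : ∀ s, Γf 0 s = γ s := by intro s; simp [hΓf, hcl0]
    have hD0 : ∀ s, Df 0 s = deriv γ s := by intro s; simp [hDf, hcl0]
    have hΓouter : ∀ l s, δ ≤ |s| → Γf l s = γ s := by
      intro l s hs; simp [hΓf, hψ, hχ0 s hs]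
    have hΓrepr : ∀ l s, Γf l s - a' = ((x s : ℂ) + (((1 - cl l * χ s) * y s : ℝ):ℂ) * I) * v := by
      intro l s
      have h1 := hγz s
      rw [hΓf]
      calc γ s - ((cl l * ψ s : ℝ):ℂ) * (I * v) - a'
          = (γ s - a') - ((cl l * ψ s : ℝ):ℂ) * (I * v) := by ring
        _ = (z s - ((cl l * ψ s : ℝ):ℂ) * I) * v := by rw [h1]; ring
        _ = ((x s : ℂ) + (((1 - cl l * χ s) * y s : ℝ):ℂ) * I) * v := by
            rw [hzxy s, hψ]; push_cast; ring
    have hΓmid1 : ∀ s : ℝ, |s| ≤ 3*δ/4 → Γf 1 s = a' + (x s : ℂ) * v := by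
      intro s hs
      have h1 := hΓrepr 1 s
      rw [hcl1, hχ1 s hs] at h1
      norm_num at h1
      linear_combination h1
    -- avoidance of points strictly outside the cone
    have havoid : ∀ (μ : ℂ), η * |μ.re| < |μ.im| → (a' + μ * v) ∉ Set.range γ →
        ∀ l s, Γf l s ≠ a' + μ * v := by
      intro μ hμ hμr l s heq
      rcases le_or_gt δ |s| with hs | hs
      · rw [hΓouter l s hs] at heq
        exact hμr ⟨s, heq⟩
      · have h1 := hΓrepr l s
        rw [heq] at h1
        have h1' : μ * v = ((x s : ℂ) + (((1 - cl l * χ s) * y s : ℝ):ℂ) * I) * v := by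
          linear_combination h1
        have h2 : (x s : ℂ) + (((1 - cl l * χ s) * y s : ℝ):ℂ) * I = μ :=
          (mul_right_cancel₀ hv0 h1').symm
        have hre : μ.re = x s := by rw [← h2]; simp
        have him2 : μ.im = (1 - cl l * χ s) * y s := by rw [← h2]; simp
        have hb1 : 0 ≤ 1 - cl l * χ s ∧ 1 - cl l * χ s ≤ 1 := by
          constructor <;>
            nlinarith [(hclmem l).1, (hclmem l).2, (hχmem s).1, (hχmem s).2]
        have h3 : |μ.im| ≤ |y s| := by
          rw [him2, abs_mul, _root_.abs_of_nonneg hb1.1]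
          nlinarith [abs_nonneg (y s)]
        have h4 := hcone s hs.le
        rw [hre] at hμ
        linarith
    -- homotopy invariance of the winding integral
    have hwind_eq : ∀ μ : ℂ, η * |μ.re| < |μ.im| → (a' + μ * v) ∉ Set.range γ →
        (∫ s in (-(1/2):ℝ)..(1/2:ℝ), deriv γ s / (γ s - (a' + μ*v)))
        = ∫ s in (-(1/2):ℝ)..(1/2:ℝ), Df 1 s / (Γf 1 s - (a' + μ*v)) := by
      intro μ hμ1 hμ2
      set p : ℂ := a' + μ * v with hpdef
      have hav := havoid μ hμ1 hμ2
      set W : ℝ → ℂ := fun l => ∫ s in (-(1/2):ℝ)..(1/2:ℝ), Df l s / (Γf l s - p) with hW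
      have hWc : Continuous W := by
        apply continuous_param Df (fun l s => Γf l s - p) _ _ hDcont
          (hΓcont.sub continuous_const)
        exact fun l s => sub_ne_zero.2 (hav l s)
      have hWint : ∀ l ∈ Icc (0:ℝ) 1, ∃ n : ℤ, W l = n * (2*Real.pi*I) := by
        intro l _
        apply winding_integer (Γf l) (Df l) p (hΓd l)
        · exact hDcont.comp (continuous_const.prodMk continuous_id)
        · rw [hΓouter l _ (by rw [abs_neg, abs_of_pos (by norm_num)]; linarith),
            hΓouter l _ (by rw [abs_of_pos (by norm_num)]; linarith)]
          exact hper12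
        · exact fun s => hav l s
      have h01 := eq_of_continuousOn_int W 0 1 zero_le_one hWc.continuousOn hWint
      have hW0 : W 0 = ∫ s in (-(1/2):ℝ)..(1/2:ℝ), deriv γ s / (γ s - p) := by
        rw [hW]
        apply intervalIntegral.integral_congr
        intro s _
        show Df 0 s / (Γf 0 s - p) = deriv γ s / (γ s - p)
        rw [hD0 s, hΓ0 s]
      rw [← hW0, h01, hW]
    -- endpoints of straight part
    set xr : ℝ := x (δ/2) with hxrdef
    set xl : ℝ := x (-(δ/2)) with hxldef
    have hxrpos : 0 < xr := by
      have := hxposs (δ/2) (by positivity) (by linarith)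
      nlinarith
    have hxlneg : xl < 0 := by
      have := hxnegs (-(δ/2)) (by linarith) (by linarith)
      nlinarith
    -- curve away from a' on the outer region
    have hΓ1nea : ∀ s : ℝ, δ/2 ≤ |s| → |s| ≤ 1/2 → Γf 1 s ≠ a' := by
      intro s h1 h2 heq
      rcases le_or_gt δ |s| with h3 | h3
      · rw [hΓouter 1 s h3] at heq
        obtain ⟨n, hn⟩ := hinj s 0 heq
        have hs : s = -(n:ℝ) := by linarith
        rcases eq_or_ne n 0 with rfl | hn0
        · rw [hs] at h1; norm_num at h1; linarith
        · have h4 : (1:ℝ) ≤ |(n:ℝ)| := by exact_mod_cast Int.one_le_abs hn0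
          rw [hs, abs_neg] at h2; linarith
      · have h4 := hΓrepr 1 s
        rw [heq, sub_self] at h4
        have h5 : (x s : ℂ) + (((1 - cl 1 * χ s) * y s : ℝ):ℂ) * I = 0 := by
          rcases mul_eq_zero.1 h4.symm with h | h
          · exact h
          · exact absurd h hv0
        have h6 : x s = 0 := by
          have := congrArg Complex.re h5; simpa using this
        have h7 := hxlow s h3.le
        rw [h6, abs_zero] at h7
        nlinarith
    -- the outer (remainder) integral and its continuity at a'
    set Rp : ℂ → ℂ := fun pp => (∫ s in (-(1/2):ℝ)..(-(δ/2):ℝ), Df 1 s / (Γf 1 s - pp))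
        + (∫ s in ((δ/2):ℝ)..((1/2):ℝ), Df 1 s / (Γf 1 s - pp)) with hRpdef
    have hDf1c : Continuous (fun s => Df 1 s) := hDcont.comp (continuous_const.prodMk continuous_id)
    have hΓf1c : Continuous (fun s => Γf 1 s) := hΓcont.comp (continuous_const.prodMk continuous_id)
    have hRcont : ContinuousAt Rp a' := by
      apply ContinuousAt.add
      · apply continuousAt_winding _ _ _ _ _ hDf1c hΓf1c
        intro s hs
        rw [uIcc_of_le (by linarith)] at hs
        exact hΓ1nea s (by rw [abs_of_neg (by nlinarith [hs.2])]; linarith [hs.2])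
          (by rw [abs_of_neg (by nlinarith [hs.2])]; linarith [hs.1])
      · apply continuousAt_winding _ _ _ _ _ hDf1c hΓf1c
        intro s hs
        rw [uIcc_of_le (by linarith)] at hs
        exact hΓ1nea s (by rw [abs_of_pos (by nlinarith [hs.1])]; linarith [hs.1])
          (by rw [abs_of_pos (by nlinarith [hs.1])]; linarith [hs.2])
    -- derivative data on the straight part
    set xd : ℝ → ℝ := fun s => (deriv γ s / v).re with hxddef
    have hxderiv : ∀ s, HasDerivAt x (xd s) s := fun s =>
      Complex.reCLM.hasFDerivAt.comp_hasDerivAt s (hzd s)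
    have hxdc : Continuous xd := Complex.continuous_re.comp (hγdc.div_const v)
    have hΓ1deriv : ∀ s : ℝ, |s| < 3*δ/4 → HasDerivAt (Γf 1) ((xd s : ℂ) * v) s := by
      intro s hs
      have hopen : IsOpen {u : ℝ | |u| < 3*δ/4} := isOpen_lt continuous_abs continuous_const
      have hev : (fun u => a' + (x u : ℂ) * v) =ᶠ[𝓝 s] Γf 1 := by
        filter_upwards [hopen.mem_nhds hs] with u hu
        exact (hΓmid1 u (le_of_lt hu)).symm
      have h1 : HasDerivAt (fun u => a' + (x u : ℂ) * v) ((xd s : ℂ) * v) s := by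
        apply HasDerivAt.const_add
        exact (Complex.ofRealCLM.hasFDerivAt.comp_hasDerivAt s (hxderiv s)).mul_const v
      exact h1.congr_of_eventuallyEq hev.symm
    have hDf1eq : ∀ s : ℝ, |s| < 3*δ/4 → Df 1 s = (xd s : ℂ) * v := fun s hs =>
      HasDerivAt.unique (hΓd 1 s) (hΓ1deriv s hs)
    -- evaluation of the middle integral
    have hmid : ∀ μ : ℂ, μ.im ≠ 0 →
        (∫ s in (-(δ/2):ℝ)..((δ/2):ℝ), Df 1 s / (Γf 1 s - (a' + μ * v)))
        = Complex.log ((xr:ℂ) - μ) - Complex.log ((xl:ℂ) - μ) := by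
      intro μ hμ
      have him : ∀ t : ℝ, ((t:ℂ) - μ).im ≠ 0 := by
        intro t
        simp only [Complex.sub_im, Complex.ofReal_im, zero_sub]
        exact neg_ne_zero.2 hμ
      have hne : ∀ t : ℝ, (t:ℂ) - μ ≠ 0 := fun t h0 => him t (by rw [h0]; simp)
      have hslit : ∀ t : ℝ, ((t:ℂ) - μ) ∈ Complex.slitPlane := fun t => Or.inr (him t)
      have heq : ∀ s ∈ uIcc (-(δ/2):ℝ) ((δ/2):ℝ),
          Df 1 s / (Γf 1 s - (a' + μ*v)) = (xd s : ℂ) / ((x s : ℂ) - μ) := by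
        intro s hs
        rw [uIcc_of_le (by linarith)] at hs
        have hsb : |s| ≤ δ/2 := abs_le.2 ⟨hs.1, hs.2⟩
        have h1 : |s| < 3*δ/4 := by nlinarith
        rw [hDf1eq s h1, hΓmid1 s (by linarith)]
        have h2 : a' + (x s : ℂ)*v - (a' + μ*v) = ((x s : ℂ) - μ) * v := by ring
        rw [h2, mul_div_mul_right _ _ hv0]
      rw [intervalIntegral.integral_congr heq]
      have hderivlog : ∀ s ∈ uIcc (-(δ/2):ℝ) ((δ/2):ℝ),
          HasDerivAt (fun u => Complex.log ((x u : ℂ) - μ)) ((xd s:ℂ) / ((x s:ℂ) - μ)) s := by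
        intro s _
        have h1 : HasDerivAt (fun u => (x u : ℂ) - μ) ((xd s : ℂ)) s :=
          (Complex.ofRealCLM.hasFDerivAt.comp_hasDerivAt s (hxderiv s)).sub_const μ
        exact HasDerivAt.clog_real h1 (hslit (x s))
      have hint : IntervalIntegrable (fun s => (xd s:ℂ)/((x s:ℂ) - μ)) volume
          (-(δ/2):ℝ) ((δ/2):ℝ) := by
        apply Continuous.intervalIntegrable
        apply (Complex.continuous_ofReal.comp hxdc).div
          ((Complex.continuous_ofReal.comp (Complex.continuous_re.comp hzc)).sub continuous_const)
        exact fun s => hne (x s)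
      rw [intervalIntegral.integral_eq_sub_of_hasDerivAt hderivlog hint]
    -- regime estimates for the two approach points
    have hμpim : ∀ t : ℝ, 0 < t → t ≤ δ → w.im * t / 2 ≤ (w * z t).im := by
      intro t h1 h2
      have ha : |t| ≤ δ := by rw [abs_of_pos h1]; exact h2
      have hxt := hxposs t h1 h2
      have hyt := hyb t ha
      rw [abs_of_pos h1] at hyt
      have h5 : (w * z t).im = w.re * y t + w.im * x t := by
        rw [Complex.mul_im]
      rw [h5]
      nlinarith [neg_abs_le (w.re * y t), abs_mul w.re (y t),
        mul_le_mul_of_nonneg_left hyt (abs_nonneg w.re),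
        mul_le_mul_of_nonneg_left hxt hw.le,
        mul_le_mul_of_nonneg_right hεwA h1.le,
        mul_nonneg hw.le h1.le]
    have hμmim : ∀ t : ℝ, 0 < t → t ≤ δ → (w * z (-t)).im ≤ -(w.im * t / 2) := by
      intro t h1 h2
      have ha : |(-t)| ≤ δ := by rw [abs_neg, abs_of_pos h1]; exact h2
      have hxt := hxnegs (-t) (by linarith) (by linarith)
      have hyt := hyb (-t) ha
      rw [abs_neg, abs_of_pos h1] at hyt
      have h5 : (w * z (-t)).im = w.re * y (-t) + w.im * x (-t) := by
        rw [Complex.mul_im]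
      rw [h5]
      nlinarith [le_abs_self (w.re * y (-t)), abs_mul w.re (y (-t)),
        mul_le_mul_of_nonneg_left hyt (abs_nonneg w.re),
        mul_le_mul_of_nonneg_left hxt hw.le,
        mul_le_mul_of_nonneg_right hεwA h1.le,
        mul_nonneg hw.le h1.le]
    have hμre : ∀ u : ℝ, |u| ≤ δ → |(w * z u).re| ≤ 2*A*|u| := by
      intro u hu
      have hxu := hxup u hu
      have hyu := hyb u hu
      have h5 : (w * z u).re = w.re * x u - w.im * y u := by
        rw [Complex.mul_re]
      rw [h5]
      have h6 : |w.re * x u - w.im * y u| ≤ |w.re * x u| + |w.im * y u| := by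
        rw [sub_eq_add_neg]
        exact (abs_add_le _ _).trans (by rw [abs_neg])
      rw [abs_mul, abs_mul] at h6
      have h7 : |w.im| = w.im := _root_.abs_of_pos hw
      rw [h7] at h6
      have h8 : |w.re| * |x u| ≤ |w.re| * ((1+ε) * |u|) :=
        mul_le_mul_of_nonneg_left hxu (abs_nonneg w.re)
      have h9 : w.im * |y u| ≤ w.im * (ε * |u|) :=
        mul_le_mul_of_nonneg_left hyu hw.le
      have h10 : |w.re| ≤ A := by rw [hA]; linarith [hw.le]
      have h11 : w.im ≤ A := by rw [hA]; linarith [abs_nonneg w.re]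
      nlinarith [abs_nonneg u, abs_nonneg w.re, hε0.le, hεle,
        mul_nonneg (abs_nonneg w.re) (abs_nonneg u), mul_nonneg hw.le (abs_nonneg u),
        mul_le_mul_of_nonneg_right h10 (mul_nonneg hε0.le (abs_nonneg u)),
        mul_le_mul_of_nonneg_right h11 (mul_nonneg hε0.le (abs_nonneg u))]
    have hη2A : η * (2*A) = w.im/4 := by rw [hη]; field_simp; ring
    have hμpcone : ∀ t : ℝ, 0 < t → t ≤ δ → η * |(w * z t).re| < |(w * z t).im| := by
      intro t h1 h2
      have k1 := hμre t (by rw [abs_of_pos h1]; exact h2)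
      rw [abs_of_pos h1] at k1
      have k2 := hμpim t h1 h2
      have k3 : η * |(w * z t).re| ≤ η * (2*A*t) := mul_le_mul_of_nonneg_left k1 hη0.le
      have k4 : η * (2*A*t) = w.im/4 * t := by
        rw [show η * (2*A*t) = η * (2*A) * t by ring, hη2A]
      have k5 : (w * z t).im ≤ |(w * z t).im| := le_abs_self _
      have k6 : η * |(w * z t).re| ≤ w.im/4 * t := by rw [← k4]; exact k3
      have k7 : w.im/4 * t < w.im * t / 2 := by linarith [mul_pos hw h1]
      exact lt_of_le_of_lt k6 (lt_of_lt_of_le k7 (le_trans k2 k5))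
    have hμmcone : ∀ t : ℝ, 0 < t → t ≤ δ → η * |(w * z (-t)).re| < |(w * z (-t)).im| := by
      intro t h1 h2
      have k1 := hμre (-t) (by rw [abs_neg, abs_of_pos h1]; exact h2)
      rw [abs_neg, abs_of_pos h1] at k1
      have k2 := hμmim t h1 h2
      have k3 : η * |(w * z (-t)).re| ≤ η * (2*A*t) := mul_le_mul_of_nonneg_left k1 hη0.le
      have k4 : η * (2*A*t) = w.im/4 * t := by
        rw [show η * (2*A*t) = η * (2*A) * t by ring, hη2A]
      have k5 : -(w * z (-t)).im ≤ |(w * z (-t)).im| := neg_le_abs _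
      have k6 : η * |(w * z (-t)).re| ≤ w.im/4 * t := by rw [← k4]; exact k3
      have k7 : w.im/4 * t < w.im * t / 2 := by linarith [mul_pos hw h1]
      have k8 : w.im * t / 2 ≤ -(w * z (-t)).im := by linarith [k2]
      exact lt_of_le_of_lt k6 (lt_of_lt_of_le k7 (le_trans k8 k5))
    have hdcp : ∀ u : ℝ, a' + (w * z u) * v = dc u := by
      intro u
      show a' + (w * z u) * v = a' + w * (γ u - a')
      rw [hγz u]; ring
    have hpnotp : ∀ t : ℝ, 0 < t → t ≤ δ → (a' + (w * z t) * v) ∉ Set.range γ := by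
      intro t h1 h2 hmem
      rw [hdcp t] at hmem
      have h3 := hexist t hmem
      rw [← hdcp t] at h3
      have h4 : (w * z t) * v = 0 := by linear_combination h3
      rcases mul_eq_zero.1 h4 with h5 | h5
      · have h6 := hμpim t h1 h2
        rw [h5] at h6
        simp only [Complex.zero_im] at h6
        nlinarith [hw, h1]
      · exact hv0 h5
    have hpnotm : ∀ t : ℝ, 0 < t → t ≤ δ → (a' + (w * z (-t)) * v) ∉ Set.range γ := by
      intro t h1 h2 hmem
      rw [hdcp (-t)] at hmem
      have h3 := hexist (-t) hmem
      rw [← hdcp (-t)] at h3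
      have h4 : (w * z (-t)) * v = 0 := by linear_combination h3
      rcases mul_eq_zero.1 h4 with h5 | h5
      · have h6 := hμmim t h1 h2
        rw [h5] at h6
        simp only [Complex.zero_im] at h6
        nlinarith [hw, h1]
      · exact hv0 h5
    -- winding function around points off the curve
    set Wg : ℂ → ℂ := fun p => ∫ s in (-(1/2):ℝ)..(1/2:ℝ), deriv γ s / (γ s - p) with hWgdef
    have hWgint : ∀ p : ℂ, p ∉ Set.range γ → ∃ n : ℤ, Wg p = n * (2*Real.pi*I) := by
      intro p hp
      exact winding_integer γ (deriv γ) p hγd hγdc hper12 (fun s h => hp ⟨s, h⟩)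
    have hWgca : ∀ p : ℂ, p ∉ Set.range γ → ContinuousAt Wg p := by
      intro p hp
      exact continuousAt_winding (deriv γ) γ _ _ p hγdc hγc (fun s _ h => hp ⟨s, h⟩)
    -- constancy of the winding number along the similar copy
    have hdcnot : ∀ τ : ℝ, 0 < τ → τ < 1 → dc τ ∉ Set.range γ := by
      intro τ h1 h2 hmem
      have h3 := hexist τ hmem
      have h4 : w * (γ τ - a') = 0 := by
        have h3' : a' + w * (γ τ - a') = a' := h3
        linear_combination h3'
      have h5 : γ τ = γ 0 := by
        rcases mul_eq_zero.1 h4 with h | h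
        · exact absurd h hw0
        · have : γ τ = a' := by linear_combination h
          exact this
      obtain ⟨n, hn⟩ := hinj τ 0 h5
      have h6 : τ = -(n:ℝ) := by linarith
      have h7 : (0:ℝ) < -(n:ℝ) := by rw [← h6]; exact h1
      have h8 : -(n:ℝ) < 1 := by rw [← h6]; exact h2
      have h9 : (0:ℤ) < -n := by exact_mod_cast h7
      have h10 : -n < 1 := by exact_mod_cast h8
      omega
    have hconst : ∀ t : ℝ, 0 < t → t ≤ 1/2 → Wg (dc t) = Wg (dc (1 - t)) := by
      intro t h1 h2
      refine eq_of_continuousOn_int (fun τ => Wg (dc τ)) t (1-t) (by linarith) ?_ ?_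
      · intro τ hτ
        have hτ1 : 0 < τ := lt_of_lt_of_le h1 hτ.1
        have hτ2 : τ < 1 := by have := hτ.2; linarith
        exact ((hWgca (dc τ) (hdcnot τ hτ1 hτ2)).comp hdccont.continuousAt).continuousWithinAt
      · intro τ hτ
        have hτ1 : 0 < τ := lt_of_lt_of_le h1 hτ.1
        have hτ2 : τ < 1 := by have := hτ.2; linarith
        exact hWgint (dc τ) (hdcnot τ hτ1 hτ2)
    have hdcflip : ∀ t : ℝ, dc (-t) = dc (1 - t) := by
      intro t
      have h1 := hper (-t)
      rw [show -t + 1 = 1 - t by ring] at h1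
      show a' + w * (γ (-t) - a') = a' + w * (γ (1-t) - a')
      rw [h1]
    -- the combined identity, valid for small positive t
    have hIoc : Ioc (0:ℝ) δ ∈ 𝓝[>] (0:ℝ) := Ioc_mem_nhdsGT_of_mem ⟨le_refl 0, hδpos⟩
    have hWboth : ∀ u : ℝ, η * |(w * z u).re| < |(w * z u).im| → (w * z u).im ≠ 0 →
        (a' + (w * z u) * v) ∉ Set.range γ →
        Wg (a' + (w * z u) * v) =
          (Complex.log ((xr:ℂ) - w * z u) - Complex.log ((xl:ℂ) - w * z u))
          + Rp (a' + (w * z u) * v) := by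
      intro u hcone' himu hnr'
      have hintg : ∀ (u1 u2 : ℝ), IntervalIntegrable
          (fun s => Df 1 s / (Γf 1 s - (a' + (w * z u) * v))) volume u1 u2 := by
        intro u1 u2
        apply Continuous.intervalIntegrable
        apply hDf1c.div (hΓf1c.sub continuous_const)
        exact fun s => sub_ne_zero.2 (havoid (w * z u) hcone' hnr' 1 s)
      have e2 : (∫ s in (-(1/2):ℝ)..(-(δ/2):ℝ), Df 1 s / (Γf 1 s - (a' + (w * z u) * v)))
          + (∫ s in (-(δ/2):ℝ)..(1/2:ℝ), Df 1 s / (Γf 1 s - (a' + (w * z u) * v)))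
          = ∫ s in (-(1/2):ℝ)..(1/2:ℝ), Df 1 s / (Γf 1 s - (a' + (w * z u) * v)) :=
        intervalIntegral.integral_add_adjacent_intervals (hintg _ _) (hintg _ _)
      have e3 : (∫ s in (-(δ/2):ℝ)..((δ/2):ℝ), Df 1 s / (Γf 1 s - (a' + (w * z u) * v)))
          + (∫ s in ((δ/2):ℝ)..(1/2:ℝ), Df 1 s / (Γf 1 s - (a' + (w * z u) * v)))
          = ∫ s in (-(δ/2):ℝ)..(1/2:ℝ), Df 1 s / (Γf 1 s - (a' + (w * z u) * v)) :=
        intervalIntegral.integral_add_adjacent_intervals (hintg _ _) (hintg _ _)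
      show (∫ s in (-(1/2):ℝ)..(1/2:ℝ), deriv γ s / (γ s - (a' + (w * z u) * v))) =
          (Complex.log ((xr:ℂ) - w * z u) - Complex.log ((xl:ℂ) - w * z u))
          + ((∫ s in (-(1/2):ℝ)..(-(δ/2):ℝ), Df 1 s / (Γf 1 s - (a' + (w * z u) * v)))
            + (∫ s in ((δ/2):ℝ)..((1/2):ℝ), Df 1 s / (Γf 1 s - (a' + (w * z u) * v))))
      rw [hwind_eq (w * z u) hcone' hnr', ← e2, ← e3, hmid (w * z u) himu]
      ring
    have hev : ∀ᶠ t in 𝓝[>] (0:ℝ), Wg (dc t) - Wg (dc (-t)) =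
        ((Complex.log ((xr:ℂ) - w * z t) - Complex.log ((xr:ℂ) - w * z (-t)))
        + (Complex.log ((xl:ℂ) - w * z (-t)) - Complex.log ((xl:ℂ) - w * z t)))
        + (Rp (dc t) - Rp (dc (-t))) := by
      filter_upwards [hIoc] with t ht
      obtain ⟨h1, h2⟩ := ht
      have himp : (w * z t).im ≠ 0 := by
        have := hμpim t h1 h2
        intro h0; rw [h0] at this; nlinarith [hw]
      have himm : (w * z (-t)).im ≠ 0 := by
        have := hμmim t h1 h2
        intro h0; rw [h0] at this; nlinarith [hw]
      have hWp := hWboth t (hμpcone t h1 h2) himp (hpnotp t h1 h2)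
      have hWm := hWboth (-t) (hμmcone t h1 h2) himm (hpnotm t h1 h2)
      rw [← hdcp t, ← hdcp (-t), hWp, hWm]
      ring
    -- limits of the pieces
    have hμptend : Tendsto (fun t : ℝ => w * z t) (𝓝[>] 0) (𝓝 0) := by
      have h1 : Continuous fun t : ℝ => w * z t := continuous_const.mul hzc
      have h2 : Tendsto (fun t : ℝ => w * z t) (𝓝[>] (0:ℝ)) (𝓝 (w * z 0)) :=
        (h1.tendsto 0).mono_left nhdsWithin_le_nhds
      simpa [hz0] using h2
    have hμmtend : Tendsto (fun t : ℝ => w * z (-t)) (𝓝[>] 0) (𝓝 0) := by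
      have h1 : Continuous fun t : ℝ => w * z (-t) :=
        continuous_const.mul (hzc.comp continuous_neg)
      have h2 : Tendsto (fun t : ℝ => w * z (-t)) (𝓝[>] (0:ℝ)) (𝓝 (w * z (-0))) :=
        (h1.tendsto 0).mono_left nhdsWithin_le_nhds
      simpa [hz0] using h2
    have hxrslit : ((xr:ℂ)) ∈ Complex.slitPlane := Or.inl (by simpa using hxrpos)
    have hclogxr := continuousAt_clog hxrslit
    have hlim1 : Tendsto (fun t : ℝ => Complex.log ((xr:ℂ) - w * z t)
        - Complex.log ((xr:ℂ) - w * z (-t))) (𝓝[>] 0) (𝓝 0) := by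
      have t1 : Tendsto (fun t : ℝ => (xr:ℂ) - w * z t) (𝓝[>] 0) (𝓝 ((xr:ℂ))) := by
        simpa using tendsto_const_nhds.sub hμptend
      have t2 : Tendsto (fun t : ℝ => (xr:ℂ) - w * z (-t)) (𝓝[>] 0) (𝓝 ((xr:ℂ))) := by
        simpa using tendsto_const_nhds.sub hμmtend
      have l1 := hclogxr.tendsto.comp t1
      have l2 := hclogxr.tendsto.comp t2
      simpa using l1.sub l2
    have hxlre : ((xl:ℂ)).re < 0 := by simpa using hxlneg
    have hxlim0 : ((xl:ℂ)).im = 0 := by simp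
    have hlim2 : Tendsto (fun t : ℝ => Complex.log ((xl:ℂ) - w * z (-t))
        - Complex.log ((xl:ℂ) - w * z t)) (𝓝[>] 0) (𝓝 (2*Real.pi*I)) := by
      have tlow : Tendsto (fun t : ℝ => (xl:ℂ) - w * z t) (𝓝[>] 0)
          (𝓝[{q : ℂ | q.im < 0}] ((xl:ℂ))) := by
        rw [tendsto_nhdsWithin_iff]
        constructor
        · simpa using tendsto_const_nhds.sub hμptend
        · filter_upwards [hIoc] with t ht
          have := hμpim t ht.1 ht.2
          show ((xl:ℂ) - w * z t).im < 0
          rw [Complex.sub_im, hxlim0]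
          nlinarith [hw, ht.1]
      have thi : Tendsto (fun t : ℝ => (xl:ℂ) - w * z (-t)) (𝓝[>] 0)
          (𝓝[{q : ℂ | 0 ≤ q.im}] ((xl:ℂ))) := by
        rw [tendsto_nhdsWithin_iff]
        constructor
        · simpa using tendsto_const_nhds.sub hμmtend
        · filter_upwards [hIoc] with t ht
          have := hμmim t ht.1 ht.2
          show 0 ≤ ((xl:ℂ) - w * z (-t)).im
          rw [Complex.sub_im, hxlim0]
          nlinarith [hw, ht.1]
      have l1 := (Complex.tendsto_log_nhdsWithin_im_neg_of_re_neg_of_im_zero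
        hxlre hxlim0).comp tlow
      have l2 := (Complex.tendsto_log_nhdsWithin_im_nonneg_of_re_neg_of_im_zero
        hxlre hxlim0).comp thi
      have l3 := l2.sub l1
      have hval : ((Real.log ‖(xl:ℂ)‖ : ℂ) + Real.pi * I)
          - ((Real.log ‖(xl:ℂ)‖ : ℂ) - Real.pi * I) = 2*Real.pi*I := by
        push_cast; ring
      rw [hval] at l3
      exact l3
    have hlim3 : Tendsto (fun t : ℝ => Rp (dc t) - Rp (dc (-t))) (𝓝[>] 0) (𝓝 0) := by
      have hdct : Tendsto (fun t : ℝ => dc t) (𝓝[>] 0) (𝓝 a') := by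
        have h2 : Tendsto dc (𝓝[>] (0:ℝ)) (𝓝 (dc 0)) :=
          (hdccont.tendsto 0).mono_left nhdsWithin_le_nhds
        rwa [hdc0] at h2
      have hdcmt : Tendsto (fun t : ℝ => dc (-t)) (𝓝[>] 0) (𝓝 a') := by
        have h1 : Continuous fun t : ℝ => dc (-t) := hdccont.comp continuous_neg
        have h2 : Tendsto (fun t : ℝ => dc (-t)) (𝓝[>] (0:ℝ)) (𝓝 (dc (-0))) :=
          (h1.tendsto 0).mono_left nhdsWithin_le_nhds
        simpa [hdc0] using h2
      have l1 := hRcont.tendsto.comp hdct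
      have l2 := hRcont.tendsto.comp hdcmt
      simpa using l1.sub l2
    have hTlim : Tendsto (fun t : ℝ => Wg (dc t) - Wg (dc (-t))) (𝓝[>] 0)
        (𝓝 (2*Real.pi*I)) := by
      have hsum := (hlim1.add hlim2).add hlim3
      have hval : ((0 : ℂ) + 2*Real.pi*I) + 0 = 2*Real.pi*I := by ring
      rw [hval] at hsum
      exact Filter.Tendsto.congr' (Filter.EventuallyEq.symm hev) hsum
    have h2πI : (2*Real.pi*I : ℂ) ≠ 0 := by
      simp [Real.pi_ne_zero, Complex.I_ne_zero]
    have hevne := hTlim.eventually_ne h2πI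
    obtain ⟨t, hne0, hmem⟩ := (hevne.and hIoc).exists
    apply hne0
    rw [hdcflip t, ← hconst t hmem.1 (by linarith [hmem.2, hδlt])]
    exact sub_self _


end InscribedAux

/-- Every smooth simple closed curve `C ⊂ ℂ` inscribes a triangle directly
similar to any given nondegenerate triangle `abc`: there are pairwise distinct
points `a', b', c' ∈ C` with `(c' − a')/(b' − a') = (c − a)/(b − a)`. -/
theorem inscribed_similar_triangle (C : Set ℂ)
    (hC : ∃ γ : ℝ → ℂ, ContDiff ℝ 1 γ ∧ Function.Periodic γ 1 ∧
      (∀ s t : ℝ, γ s = γ t → ∃ n : ℤ, t = s + n) ∧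
      (∀ s, deriv γ s ≠ 0) ∧ C = Set.range γ)
    (a b c : ℂ) (hab : a ≠ b) (hac : a ≠ c) (hbc : b ≠ c)
    (hncol : ¬ Collinear ℝ ({a, b, c} : Set ℂ)) :
    ∃ a' b' c' : ℂ, a' ∈ C ∧ b' ∈ C ∧ c' ∈ C ∧
      a' ≠ b' ∧ a' ≠ c' ∧ b' ≠ c' ∧
      (c' - a') / (b' - a') = (c - a) / (b - a) := by
  obtain ⟨γ, hγ, hper, hinj, hder, rfl⟩ := hC
  have hba : b - a ≠ 0 := sub_ne_zero.2 hab.symm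
  have hca : c - a ≠ 0 := sub_ne_zero.2 hac.symm
  set w : ℂ := (c - a) / (b - a) with hwdef
  have hw0 : w ≠ 0 := div_ne_zero hca hba
  have hwmul : w * (b - a) = c - a := div_mul_cancel₀ _ hba
  have him : w.im ≠ 0 := by
    intro h0
    apply hncol
    rw [collinear_iff_of_mem (Set.mem_insert a {b, c})]
    refine ⟨b - a, ?_⟩
    intro p hp
    rcases hp with rfl | hp
    · exact ⟨0, by simp⟩
    rcases hp with rfl | hp
    · exact ⟨1, by simp⟩
    rcases hp with rfl
    refine ⟨w.re, ?_⟩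
    have : (w.re : ℂ) = w := by
      apply Complex.ext <;> simp [h0]
    rw [Complex.real_smul, this, hwmul]
    simp
  rcases him.lt_or_gt with hneg | hpos
  · -- use w⁻¹, which has positive imaginary part
    have : 0 < (w⁻¹).im := by
      rw [Complex.inv_im]
      have h1 : 0 < Complex.normSq w := Complex.normSq_pos.2 hw0
      exact div_pos (by linarith) h1
    obtain ⟨p, q, r, hp, hq, hr, hpq, hpr, hqr, hrel⟩ :=
      InscribedAux.key γ hγ hper hinj hder w⁻¹ this
    refine ⟨p, r, q, hp, hr, hq, hpr, hpq, hqr.symm, ?_⟩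
    have hrp : r - p ≠ 0 := sub_ne_zero.2 hpr.symm
    have h2 : q - p = w * (r - p) := by
      rw [hrel, ← mul_assoc, mul_inv_cancel₀ hw0, one_mul]
    rw [h2, mul_div_assoc, div_self hrp, mul_one]
  · obtain ⟨p, q, r, hp, hq, hr, hpq, hpr, hqr, hrel⟩ :=
      InscribedAux.key γ hγ hper hinj hder w hpos
    refine ⟨p, q, r, hp, hq, hr, hpq, hpr, hqr, ?_⟩
    have hqp : q - p ≠ 0 := sub_ne_zero.2 hpq.symm
    rw [hrel, mul_div_assoc, div_self hqp, mul_one]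
end
end
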